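/- Let G be a P₆-free graph, Ω a potential maximal clique in G, and D₁, D₂ two distinct connected components of G − Ω. Then either every vertex of N(D₁) \ N(D₂) is adjacent to all of D₁, or every vertex of N(D₂) \ N(D₁) is adjacent to all of D₂. -/

import Mathlib

open SimpleGraph

variable {V : Type*}

/-- `D` is (the vertex set of) a connected component of `G - S`. -/
def IsCompOf (G : SimpleGraph V) (S D : Set V) : Prop :=
  D.Nonempty ∧ Disjoint D S ∧ (G.induce D).Connected ∧
    ∀ v ∈ D, ∀ w : V, G.Adj v w → w ∉ S → w ∈ D

/-- The open neighborhood `N(D)` of a vertex set `D`. -/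
def nbhd (G : SimpleGraph V) (D : Set V) : Set V :=
  {v | v ∉ D ∧ ∃ d ∈ D, G.Adj v d}

/-- The closed neighborhood `N[D]` of a vertex set `D`. -/
def closedNbhd (G : SimpleGraph V) (D : Set V) : Set V :=
  D ∪ nbhd G D

/-- `D` is full to `S`: every vertex of `S` has a neighbor in `D`. -/
def FullTo (G : SimpleGraph V) (S D : Set V) : Prop :=
  ∀ s ∈ S, ∃ d ∈ D, G.Adj s d

/-- `S` is a minimal separator: `G - S` has at least two components full to `S`. -/
def IsMinSep (G : SimpleGraph V) (S : Set V) : Prop :=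
  ∃ D₁ D₂ : Set V, IsCompOf G S D₁ ∧ IsCompOf G S D₂ ∧ D₁ ≠ D₂ ∧
    FullTo G S D₁ ∧ FullTo G S D₂

/-- A graph is `P₆`-free if it contains no induced path on 6 vertices. -/
def P6Free (G : SimpleGraph V) : Prop :=
  IsEmpty (pathGraph 6 ↪g G)

/-- `Ω` is a potential maximal clique of `G`. -/
def IsPMC (G : SimpleGraph V) (Ω : Set V) : Prop :=
  (∀ D : Set V, IsCompOf G Ω D → nbhd G D ≠ Ω) ∧
  (∀ u ∈ Ω, ∀ v ∈ Ω, u ≠ v → ¬ G.Adj u v →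
    ∃ D : Set V, IsCompOf G Ω D ∧ u ∈ nbhd G D ∧ v ∈ nbhd G D)

/-! ### Auxiliary lemmas about walks -/

section WalkAux

variable {W : Type*} {H : SimpleGraph W}

lemma walk_exists_prefix {u v : W} (p : H.Walk u v) :
    ∀ i, i ≤ p.length → ∃ q : H.Walk u (p.getVert i), q.length = i := by
  induction p with
  | nil =>
    intro i hi
    simp only [Walk.length_nil, Nat.le_zero] at hi
    subst hi
    exact ⟨.nil, rfl⟩
  | cons h q ih =>
    intro i hi
    match i with
    | 0 => exact ⟨.nil, rfl⟩
    | (i + 1) =>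
      obtain ⟨r, hr⟩ := ih i (by simpa using hi)
      exact ⟨.cons h r, by simp [hr]⟩

lemma walk_length_drop {u v : W} (p : H.Walk u v) (n : ℕ) :
    (p.drop n).length = p.length - n := by
  induction p generalizing n with
  | nil => cases n <;> simp [Walk.drop]
  | cons h q ih =>
    cases n with
    | zero => simp [Walk.drop]
    | succ n => simp [Walk.drop, ih]

lemma shortest_ne_nonadj {u v : W} (p : H.Walk u v) (hp : p.length = H.dist u v)
    {i j : ℕ} (hij : i + 1 < j) (hj : j ≤ p.length) :
    p.getVert i ≠ p.getVert j ∧ ¬ H.Adj (p.getVert i) (p.getVert j) := by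
  obtain ⟨q, hq⟩ := walk_exists_prefix p i (by omega)
  have hd := walk_length_drop p j
  constructor
  · intro he
    have hle := H.dist_le (q.append ((p.drop j).copy he.symm rfl))
    rw [Walk.length_append, Walk.length_copy, hq, hd] at hle
    omega
  · intro ha
    have hle := H.dist_le (q.append (Walk.cons ha (p.drop j)))
    rw [Walk.length_append, Walk.length_cons, hq, hd] at hle
    omega

end WalkAux

/-! ### Auxiliary lemmas about components -/

section CompAux

variable {G : SimpleGraph V} {Ω D D₁ D₂ : Set V}

lemma ne_of_disj {A B : Set V} {x y : V} (h : Disjoint A B) (hx : x ∈ A) (hy : y ∈ B) :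
    x ≠ y := fun he => Set.disjoint_left.mp h hx (he ▸ hy)

lemma walk_closed {D' : Set V} (hDΩ : Disjoint D Ω)
    (hcl : ∀ v ∈ D', ∀ w : V, G.Adj v w → w ∉ Ω → w ∈ D') :
    ∀ {a b : ↥D} (_ : (G.induce D).Walk a b), (a : V) ∈ D' → (b : V) ∈ D' := by
  intro a b p
  induction p with
  | nil => exact id
  | @cons a w b h q ih =>
    intro ha
    apply ih
    exact hcl _ ha _ h (Set.disjoint_left.mp hDΩ w.2)

lemma comps_disjoint (h1 : IsCompOf G Ω D₁) (h2 : IsCompOf G Ω D₂) (hne : D₁ ≠ D₂) :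
    Disjoint D₁ D₂ := by
  rw [Set.disjoint_left]
  intro x hx1 hx2
  apply hne
  have key : ∀ (A B : Set V), IsCompOf G Ω A → IsCompOf G Ω B → x ∈ A → x ∈ B → A ⊆ B := by
    intro A B hA hB hxA hxB y hy
    obtain ⟨p⟩ := hA.2.2.1.preconnected ⟨x, hxA⟩ ⟨y, hy⟩
    exact walk_closed hA.2.1 hB.2.2.2 p hxB
  exact Set.Subset.antisymm (key _ _ h1 h2 hx1 hx2) (key _ _ h2 h1 hx2 hx1)

lemma cross_nonadj (h1 : IsCompOf G Ω D₁) (h2 : IsCompOf G Ω D₂) (hne : D₁ ≠ D₂)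
    {x y : V} (hx : x ∈ D₁) (hy : y ∈ D₂) : ¬ G.Adj x y := by
  intro hadj
  have hyΩ : y ∉ Ω := Set.disjoint_left.mp h2.2.1 hy
  exact Set.disjoint_left.mp (comps_disjoint h1 h2 hne) (h1.2.2.2 x hx y hadj hyΩ) hy

lemma nbhd_sub (hD : IsCompOf G Ω D) : nbhd G D ⊆ Ω := by
  rintro v ⟨hvD, d, hd, hadj⟩
  by_contra hvΩ
  exact hvD (hD.2.2.2 d hd v hadj.symm hvΩ)

lemma nonadj_of_not_mem_nbhd {v : V} (hv : v ∉ nbhd G D) (hvD : v ∉ D) {d : V} (hd : d ∈ D) :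
    ¬ G.Adj v d := fun h => hv ⟨hvD, d, hd, h⟩

lemma mixed_pair (hD : IsCompOf G Ω D) {v a d : V} (ha : a ∈ D) (hd : d ∈ D)
    (hva : G.Adj v a) (hvd : ¬ G.Adj v d) :
    ∃ x ∈ D, ∃ y ∈ D, G.Adj x y ∧ G.Adj v x ∧ ¬ G.Adj v y := by
  obtain ⟨p⟩ := hD.2.2.1.preconnected ⟨a, ha⟩ ⟨d, hd⟩
  revert hva hvd
  suffices H : ∀ {a b : ↥D} (_ : (G.induce D).Walk a b),
      G.Adj v ↑a → ¬ G.Adj v ↑b → ∃ x ∈ D, ∃ y ∈ D, G.Adj x y ∧ G.Adj v x ∧ ¬ G.Adj v y by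
    exact H p
  intro a b p
  induction p with
  | nil => intro h1 h2; exact absurd h1 h2
  | @cons a w b h q ih =>
    intro h1 h2
    by_cases hvw : G.Adj v ↑w
    · exact ih hvw h2
    · exact ⟨↑a, a.2, ↑w, w.2, h, h1, hvw⟩

end CompAux

/-! ### Building an embedding of `P₆` from six explicit vertices -/

lemma p6_of_six (G : SimpleGraph V) (x0 x1 x2 x3 x4 x5 : V)
    (a01 : G.Adj x0 x1) (a12 : G.Adj x1 x2) (a23 : G.Adj x2 x3) (a34 : G.Adj x3 x4)
    (a45 : G.Adj x4 x5)
    (n02 : ¬G.Adj x0 x2) (n03 : ¬G.Adj x0 x3) (n04 : ¬G.Adj x0 x4) (n05 : ¬G.Adj x0 x5)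
    (n13 : ¬G.Adj x1 x3) (n14 : ¬G.Adj x1 x4) (n15 : ¬G.Adj x1 x5)
    (n24 : ¬G.Adj x2 x4) (n25 : ¬G.Adj x2 x5) (n35 : ¬G.Adj x3 x5)
    (e02 : x0 ≠ x2) (e03 : x0 ≠ x3) (e04 : x0 ≠ x4) (e05 : x0 ≠ x5)
    (e13 : x1 ≠ x3) (e14 : x1 ≠ x4) (e15 : x1 ≠ x5)
    (e24 : x2 ≠ x4) (e25 : x2 ≠ x5) (e35 : x3 ≠ x5) :
    Nonempty (pathGraph 6 ↪g G) := by
  have e01 := a01.ne; have e12 := a12.ne; have e23 := a23.ne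
  have e34 := a34.ne; have e45 := a45.ne
  have s10 := a01.symm; have s21 := a12.symm; have s32 := a23.symm
  have s43 := a34.symm; have s54 := a45.symm
  have m20 : ¬G.Adj x2 x0 := fun h => n02 h.symm
  have m30 : ¬G.Adj x3 x0 := fun h => n03 h.symm
  have m40 : ¬G.Adj x4 x0 := fun h => n04 h.symm
  have m50 : ¬G.Adj x5 x0 := fun h => n05 h.symm
  have m31 : ¬G.Adj x3 x1 := fun h => n13 h.symm
  have m41 : ¬G.Adj x4 x1 := fun h => n14 h.symm
  have m51 : ¬G.Adj x5 x1 := fun h => n15 h.symm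
  have m42 : ¬G.Adj x4 x2 := fun h => n24 h.symm
  have m52 : ¬G.Adj x5 x2 := fun h => n25 h.symm
  have m53 : ¬G.Adj x5 x3 := fun h => n35 h.symm
  have f20 := e02.symm; have f30 := e03.symm; have f40 := e04.symm; have f50 := e05.symm
  have f31 := e13.symm; have f41 := e14.symm; have f51 := e15.symm
  have f42 := e24.symm; have f52 := e25.symm; have f53 := e35.symm
  have g10 := e01.symm; have g21 := e12.symm; have g32 := e23.symm
  have g43 := e34.symm; have g54 := e45.symm
  have irr0 : ¬G.Adj x0 x0 := G.loopless.irrefl _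
  have irr1 : ¬G.Adj x1 x1 := G.loopless.irrefl _
  have irr2 : ¬G.Adj x2 x2 := G.loopless.irrefl _
  have irr3 : ¬G.Adj x3 x3 := G.loopless.irrefl _
  have irr4 : ¬G.Adj x4 x4 := G.loopless.irrefl _
  have irr5 : ¬G.Adj x5 x5 := G.loopless.irrefl _
  refine ⟨⟨⟨![x0, x1, x2, x3, x4, x5], ?_⟩, ?_⟩⟩
  · intro i j hij
    fin_cases i <;> fin_cases j <;>
      first
        | rfl
        | exact absurd hij (by assumption)
  · intro a b
    show G.Adj _ _ ↔ _
    fin_cases a <;> fin_cases b <;>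
      first
        | exact iff_of_true (by assumption) (by simp only [pathGraph_adj]; decide)
        | exact iff_of_false (by assumption) (by simp only [pathGraph_adj]; decide)

/-- For a PMC `Ω` of a `P₆`-free graph and two distinct components `D₁, D₂` of `G - Ω`,
either `N(D₁) \ N(D₂)` is complete to `D₁`, or `N(D₂) \ N(D₁)` is complete to `D₂`. -/
theorem statement_9 [Fintype V] (G : SimpleGraph V) (hP6 : P6Free G)
    (Ω D₁ D₂ : Set V) (hΩ : IsPMC G Ω)
    (hD₁ : IsCompOf G Ω D₁) (hD₂ : IsCompOf G Ω D₂) (hne : D₁ ≠ D₂) :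
    (∀ v ∈ nbhd G D₁ \ nbhd G D₂, ∀ d ∈ D₁, G.Adj v d) ∨
    (∀ v ∈ nbhd G D₂ \ nbhd G D₁, ∀ d ∈ D₂, G.Adj v d) := by
  by_contra hcon
  push_neg at hcon
  obtain ⟨⟨v₁, hv₁mem, d₁', hd₁', hn₁⟩, ⟨v₂, hv₂mem, d₂', hd₂', hn₂⟩⟩ := hcon
  obtain ⟨hv₁n1, hv₁n2⟩ := hv₁mem
  obtain ⟨hv₂n2, hv₂n1⟩ := hv₂mem
  have hv₁Ω : v₁ ∈ Ω := nbhd_sub hD₁ hv₁n1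
  have hv₂Ω : v₂ ∈ Ω := nbhd_sub hD₂ hv₂n2
  obtain ⟨hv₁D1, a₀, ha₀, hadja₀⟩ := hv₁n1
  obtain ⟨hv₂D2, c₀, hc₀, hadjc₀⟩ := hv₂n2
  have hv₁D₂ : v₁ ∉ D₂ := fun h => Set.disjoint_left.mp hD₂.2.1 h hv₁Ω
  have hv₂D₁ : v₂ ∉ D₁ := fun h => Set.disjoint_left.mp hD₁.2.1 h hv₂Ω
  have hv₁nD₂ : ∀ d ∈ D₂, ¬ G.Adj v₁ d := fun d hd => nonadj_of_not_mem_nbhd hv₁n2 hv₁D₂ hd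
  have hv₂nD₁ : ∀ d ∈ D₁, ¬ G.Adj v₂ d := fun d hd => nonadj_of_not_mem_nbhd hv₂n1 hv₂D₁ hd
  obtain ⟨a, haD, b, hbD, hab, hv₁a, hv₁b⟩ := mixed_pair hD₁ ha₀ hd₁' hadja₀ hn₁
  obtain ⟨c, hcD, e, heD, hce, hv₂c, hv₂e⟩ := mixed_pair hD₂ hc₀ hd₂' hadjc₀ hn₂
  have h12 : v₁ ≠ v₂ := by
    intro h
    apply hv₁n2
    rw [h]
    exact ⟨hv₂D2, c₀, hc₀, hadjc₀⟩
  have hd₁Ω := hD₁.2.1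
  have hd₂Ω := hD₂.2.1
  have hD₁D₂ := comps_disjoint hD₁ hD₂ hne
  by_cases h12adj : G.Adj v₁ v₂
  · have hNE := p6_of_six G b a v₁ v₂ c e
      hab.symm hv₁a.symm h12adj hv₂c hce
      (fun h => hv₁b h.symm) (fun h => hv₂nD₁ b hbD h.symm)
      (cross_nonadj hD₁ hD₂ hne hbD hcD) (cross_nonadj hD₁ hD₂ hne hbD heD)
      (fun h => hv₂nD₁ a haD h.symm)
      (cross_nonadj hD₁ hD₂ hne haD hcD) (cross_nonadj hD₁ hD₂ hne haD heD)
      (hv₁nD₂ c hcD) (hv₁nD₂ e heD) hv₂e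
      (ne_of_disj hd₁Ω hbD hv₁Ω) (ne_of_disj hd₁Ω hbD hv₂Ω)
      (ne_of_disj hD₁D₂ hbD hcD) (ne_of_disj hD₁D₂ hbD heD)
      (ne_of_disj hd₁Ω haD hv₂Ω)
      (ne_of_disj hD₁D₂ haD hcD) (ne_of_disj hD₁D₂ haD heD)
      ((ne_of_disj hd₂Ω hcD hv₁Ω).symm) ((ne_of_disj hd₂Ω heD hv₁Ω).symm)
      ((ne_of_disj hd₂Ω heD hv₂Ω).symm)
    exact hP6.false hNE.some
  · obtain ⟨D₃, hD₃, hv₁N3, hv₂N3⟩ := hΩ.2 v₁ hv₁Ω v₂ hv₂Ω h12 h12adj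
    have h31 : D₃ ≠ D₁ := by intro h; rw [h] at hv₂N3; exact hv₂n1 hv₂N3
    have h32 : D₃ ≠ D₂ := by intro h; rw [h] at hv₁N3; exact hv₁n2 hv₁N3
    have hD₁D₃ := comps_disjoint hD₁ hD₃ (Ne.symm h31)
    have hD₂D₃ := comps_disjoint hD₂ hD₃ (Ne.symm h32)
    have hd₃Ω := hD₃.2.1
    obtain ⟨hv₁D3, g₁', hg₁', hadjg₁'⟩ := hv₁N3
    obtain ⟨hv₂D3, g₂', hg₂', hadjg₂'⟩ := hv₂N3
    set s : Set V := insert v₁ (insert v₂ D₃) with hs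
    have hsub : D₃ ⊆ s := fun z hz => Set.mem_insert_of_mem _ (Set.mem_insert_of_mem _ hz)
    have hv₁s : v₁ ∈ s := Set.mem_insert _ _
    have hv₂s : v₂ ∈ s := Set.mem_insert_of_mem _ (Set.mem_insert _ _)
    have hreach : (G.induce s).Reachable ⟨v₁, hv₁s⟩ ⟨v₂, hv₂s⟩ := by
      have h1 : (G.induce s).Adj ⟨v₁, hv₁s⟩ ⟨g₁', hsub hg₁'⟩ := hadjg₁'
      have h2 : (G.induce s).Adj ⟨g₂', hsub hg₂'⟩ ⟨v₂, hv₂s⟩ := hadjg₂'.symm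
      have hmid : (G.induce s).Reachable ⟨g₁', hsub hg₁'⟩ ⟨g₂', hsub hg₂'⟩ := by
        obtain ⟨p⟩ := hD₃.2.2.1.preconnected ⟨g₁', hg₁'⟩ ⟨g₂', hg₂'⟩
        exact Reachable.map (G.induceHomOfLE hsub).toHom ⟨p⟩
      exact h1.reachable.trans (hmid.trans h2.reachable)
    obtain ⟨p, hp⟩ := hreach.exists_walk_length_eq_dist
    have hpz : p.getVert 0 = ⟨v₁, hv₁s⟩ := p.getVert_zero
    have hpl : p.getVert p.length = ⟨v₂, hv₂s⟩ := p.getVert_length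
    have hL2 : 2 ≤ p.length := by
      by_contra hlt
      push_neg at hlt
      have h01 : p.length = 0 ∨ p.length = 1 := by omega
      rcases h01 with h0 | h1
      · have heq := hpl
        rw [h0] at heq
        exact h12 (congrArg Subtype.val (hpz.symm.trans heq))
      · have hadj := p.adj_getVert_succ (show 0 < p.length by omega)
        rw [hpz] at hadj
        have hone := hpl
        rw [h1] at hone
        rw [hone] at hadj
        exact h12adj hadj
    have hint : ∀ k, 1 ≤ k → k ≤ p.length - 1 → (↑(p.getVert k) : V) ∈ D₃ := by
      intro k h1 h2
      have hmem : (↑(p.getVert k) : V) = v₁ ∨ (↑(p.getVert k) : V) = v₂ ∨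
          (↑(p.getVert k) : V) ∈ D₃ := (p.getVert k).2
      rcases hmem with h | h | h
      · exfalso
        have heq : p.getVert k = p.getVert 0 := by rw [hpz]; exact Subtype.ext h
        rcases Nat.lt_or_ge k 2 with hk2 | hk2
        · have hk1 : k = 1 := by omega
          have hadj := p.adj_getVert_succ (show 0 < p.length by omega)
          rw [hk1] at heq
          rw [heq] at hadj
          exact (G.induce s).loopless.irrefl _ hadj
        · exact (shortest_ne_nonadj p hp (show 0 + 1 < k by omega) (by omega)).1 heq.symm
      · exfalso
        have heq : p.getVert k = p.getVert p.length := by rw [hpl]; exact Subtype.ext h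
        rcases Nat.lt_or_ge (k + 1) p.length with hk | hk
        · exact (shortest_ne_nonadj p hp hk le_rfl).1 heq
        · have hk1 : k + 1 = p.length := by omega
          have hadj := p.adj_getVert_succ (show k < p.length by omega)
          rw [hk1, ← heq] at hadj
          exact (G.induce s).loopless.irrefl _ hadj
      · exact h
    have hno1 : ∀ k, 1 ≤ k → k ≤ p.length → ∀ y ∈ D₁,
        ¬ G.Adj y ↑(p.getVert k) ∧ y ≠ ↑(p.getVert k) := by
      intro k h1 h2 y hy
      rcases Nat.lt_or_ge k p.length with hk | hk
      · have hmem := hint k h1 (by omega)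
        exact ⟨cross_nonadj hD₁ hD₃ (Ne.symm h31) hy hmem, ne_of_disj hD₁D₃ hy hmem⟩
      · have hk' : k = p.length := by omega
        have hv : (↑(p.getVert k) : V) = v₂ := by rw [hk', hpl]
        rw [hv]
        exact ⟨fun h => hv₂nD₁ y hy h.symm, ne_of_disj hd₁Ω hy hv₂Ω⟩
    have hnov₁ : ∀ k, 2 ≤ k → k ≤ p.length →
        ¬ G.Adj v₁ ↑(p.getVert k) ∧ v₁ ≠ ↑(p.getVert k) := by
      intro k h2 hk
      obtain ⟨hne', hna'⟩ := shortest_ne_nonadj p hp (show 0 + 1 < k by omega) hk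
      rw [hpz] at hne' hna'
      exact ⟨fun h => hna' h, fun h => hne' (Subtype.ext h)⟩
    have hadjk : ∀ k, k < p.length → G.Adj ↑(p.getVert k) ↑(p.getVert (k + 1)) :=
      fun k hk => p.adj_getVert_succ hk
    have a23 : G.Adj v₁ ↑(p.getVert 1) := by
      have h := hadjk 0 (by omega)
      rw [hpz] at h
      exact h
    by_cases hL3 : 3 ≤ p.length
    · have hNE := p6_of_six G b a v₁ ↑(p.getVert 1) ↑(p.getVert 2) ↑(p.getVert 3)
        hab.symm hv₁a.symm a23 (hadjk 1 (by omega)) (hadjk 2 (by omega))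
        (fun h => hv₁b h.symm)
        ((hno1 1 (by omega) (by omega) b hbD).1)
        ((hno1 2 (by omega) (by omega) b hbD).1)
        ((hno1 3 (by omega) (by omega) b hbD).1)
        ((hno1 1 (by omega) (by omega) a haD).1)
        ((hno1 2 (by omega) (by omega) a haD).1)
        ((hno1 3 (by omega) (by omega) a haD).1)
        ((hnov₁ 2 (by omega) (by omega)).1)
        ((hnov₁ 3 (by omega) (by omega)).1)
        (fun h => (shortest_ne_nonadj p hp (show 1 + 1 < 3 by omega) (by omega)).2 h)
        (ne_of_disj hd₁Ω hbD hv₁Ω)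
        ((hno1 1 (by omega) (by omega) b hbD).2)
        ((hno1 2 (by omega) (by omega) b hbD).2)
        ((hno1 3 (by omega) (by omega) b hbD).2)
        ((hno1 1 (by omega) (by omega) a haD).2)
        ((hno1 2 (by omega) (by omega) a haD).2)
        ((hno1 3 (by omega) (by omega) a haD).2)
        ((hnov₁ 2 (by omega) (by omega)).2)
        ((hnov₁ 3 (by omega) (by omega)).2)
        (fun h => (shortest_ne_nonadj p hp (show 1 + 1 < 3 by omega) (by omega)).1
          (Subtype.ext h))
      exact hP6.false hNE.some
    · have hL : p.length = 2 := by omega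
      have hg1 : (↑(p.getVert 1) : V) ∈ D₃ := hint 1 le_rfl (by omega)
      have hg2 := hpl
      rw [hL] at hg2
      have a34 : G.Adj ↑(p.getVert 1) v₂ := by
        have h := hadjk 1 (by omega)
        rw [hg2] at h
        exact h
      have hNE := p6_of_six G b a v₁ ↑(p.getVert 1) v₂ c
        hab.symm hv₁a.symm a23 a34 hv₂c
        (fun h => hv₁b h.symm)
        ((hno1 1 (by omega) (by omega) b hbD).1)
        (fun h => hv₂nD₁ b hbD h.symm)
        (cross_nonadj hD₁ hD₂ hne hbD hcD)
        ((hno1 1 (by omega) (by omega) a haD).1)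
        (fun h => hv₂nD₁ a haD h.symm)
        (cross_nonadj hD₁ hD₂ hne haD hcD)
        h12adj
        (hv₁nD₂ c hcD)
        (cross_nonadj hD₃ hD₂ h32 hg1 hcD)
        (ne_of_disj hd₁Ω hbD hv₁Ω)
        ((hno1 1 (by omega) (by omega) b hbD).2)
        (ne_of_disj hd₁Ω hbD hv₂Ω)
        (ne_of_disj hD₁D₂ hbD hcD)
        ((hno1 1 (by omega) (by omega) a haD).2)
        (ne_of_disj hd₁Ω haD hv₂Ω)
        (ne_of_disj hD₁D₂ haD hcD)
        h12
        ((ne_of_disj hd₂Ω hcD hv₁Ω).symm)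
        ((ne_of_disj hD₂D₃ hcD hg1).symm)
      exact hP6.false hNE.some
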